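/- Let Z ~ N(μ_z, σ_z²) and Y ~ N(0, σ_y²) be independent, σ_z, σ_y > 0. In the Kyle equilibrium, the conditional variance of Z given the total order flow V = (σ_y/σ_z)(Z − μ_z) + Y equals σ_z²/2; that is, exactly half of the variance of the asset value is resolved by observing the order flow. -/

import Mathlib

open MeasureTheory ProbabilityTheory Real Filter
open scoped NNReal ENNReal

lemma sq_mul_exp_le {b : ℝ} (hb : 0 < b) (x : ℝ) :
    x ^ 2 * Real.exp (-b * x ^ 2) ≤ 2 / b * Real.exp (-(b/2) * x ^ 2) := by
  have h1' : x ^ 2 ≤ 2 / b * Real.exp (b / 2 * x ^ 2) := by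
    rw [div_mul_eq_mul_div, le_div_iff₀ hb]
    nlinarith [Real.add_one_le_exp (b / 2 * x ^ 2), Real.exp_pos (b / 2 * x ^ 2)]
  have he : Real.exp (-b * x ^ 2)
      = (Real.exp (b / 2 * x ^ 2))⁻¹ * Real.exp (-(b/2) * x ^ 2) := by
    rw [← Real.exp_neg, ← Real.exp_add]; ring_nf
  rw [he, ← mul_assoc]
  refine mul_le_mul_of_nonneg_right ?_ (Real.exp_pos _).le
  rw [mul_inv_le_iff₀ (Real.exp_pos _)]
  calc x ^ 2 ≤ 2 / b * Real.exp (b / 2 * x ^ 2) := h1'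
    _ = _ := by ring

lemma integrable_sq_mul_exp_neg_mul_sq {b : ℝ} (hb : 0 < b) :
    Integrable (fun x : ℝ => x ^ 2 * Real.exp (-b * x ^ 2)) := by
  have hb2 : 0 < b / 2 := by linarith
  refine Integrable.mono' ((integrable_exp_neg_mul_sq hb2).const_mul (2 / b))
    ?_ (ae_of_all _ fun x => ?_)
  · exact ((continuous_pow 2).mul
      ((continuous_const.mul (continuous_pow 2)).rexp)).aestronglyMeasurable
  · calc ‖x ^ 2 * Real.exp (-b * x ^ 2)‖ = x ^ 2 * Real.exp (-b * x ^ 2) := by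
          rw [Real.norm_eq_abs, abs_of_nonneg (by positivity)]
      _ ≤ _ := sq_mul_exp_le hb x

lemma tendsto_mul_exp_neg_mul_sq_atTop {b : ℝ} (hb : 0 < b) :
    Tendsto (fun x : ℝ => x * Real.exp (-b * x ^ 2)) atTop (nhds 0) := by
  have h1 : Tendsto (fun x : ℝ => 2 / b * Real.exp (-(b/2) * x ^ 2)) atTop (nhds 0) := by
    rw [show (0:ℝ) = 2 / b * 0 by ring]
    refine Tendsto.const_mul _ (Real.tendsto_exp_atBot.comp ?_)
    exact (tendsto_pow_atTop two_ne_zero).const_mul_atTop_of_neg (by linarith)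
  refine tendsto_of_tendsto_of_tendsto_of_le_of_le' tendsto_const_nhds h1 ?_ ?_
  · filter_upwards [eventually_ge_atTop (0:ℝ)] with x hx
    positivity
  · filter_upwards [eventually_ge_atTop (1:ℝ)] with x hx
    have hxx : x * Real.exp (-b * x ^ 2) ≤ x ^ 2 * Real.exp (-b * x ^ 2) := by
      have : x ≤ x ^ 2 := by nlinarith
      exact mul_le_mul_of_nonneg_right this (Real.exp_pos _).le
    linarith [sq_mul_exp_le hb x]

lemma integral_sq_mul_exp_neg_mul_sq {b : ℝ} (hb : 0 < b) :
    ∫ x : ℝ, x ^ 2 * Real.exp (-b * x ^ 2) = Real.sqrt (π / b) / (2 * b) := by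
  set F : ℝ → ℝ := fun x => -1 / (2 * b) * (x * Real.exp (-b * x ^ 2)) with hF
  have hderiv : ∀ x : ℝ, HasDerivAt F
      (x ^ 2 * Real.exp (-b * x ^ 2) - 1 / (2 * b) * Real.exp (-b * x ^ 2)) x := by
    intro x
    have h1 : HasDerivAt (fun x : ℝ => -b * x ^ 2) (-b * (2 * x)) x := by
      simpa using ((hasDerivAt_pow 2 x).const_mul (-b))
    have h2 : HasDerivAt (fun x : ℝ => Real.exp (-b * x ^ 2))
        (Real.exp (-b * x ^ 2) * (-b * (2 * x))) x := h1.exp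
    have h3 : HasDerivAt (fun x : ℝ => x * Real.exp (-b * x ^ 2))
        (1 * Real.exp (-b * x ^ 2) + x * (Real.exp (-b * x ^ 2) * (-b * (2 * x)))) x :=
      (hasDerivAt_id x).mul h2
    have h4 := h3.const_mul (-1 / (2 * b))
    refine h4.congr_deriv ?_
    have hb0 : b ≠ 0 := hb.ne'
    field_simp
    ring
  have hint : Integrable (fun x : ℝ =>
      x ^ 2 * Real.exp (-b * x ^ 2) - 1 / (2 * b) * Real.exp (-b * x ^ 2)) :=
    (integrable_sq_mul_exp_neg_mul_sq hb).sub ((integrable_exp_neg_mul_sq hb).const_mul _)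
  have htop : Tendsto F atTop (nhds 0) := by
    rw [show (0:ℝ) = -1 / (2*b) * 0 by ring]
    exact (tendsto_mul_exp_neg_mul_sq_atTop hb).const_mul _
  have hbot : Tendsto F atBot (nhds 0) := by
    have hcomp : Tendsto (fun x : ℝ => F (-x)) atTop (nhds 0) := by
      have heq : (fun x : ℝ => F (-x)) = fun x => - F x := by
        funext x; simp only [hF]; ring_nf
      rw [heq, show (0:ℝ) = -0 by ring]
      exact htop.neg
    have h5 := hcomp.comp tendsto_neg_atBot_atTop
    refine h5.congr fun x => ?_
    simp [Function.comp]
  have key := integral_of_hasDerivAt_of_tendsto hderiv hint hbot htop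
  rw [sub_zero] at key
  have hsplit := integral_sub (integrable_sq_mul_exp_neg_mul_sq hb)
    ((integrable_exp_neg_mul_sq hb).const_mul (1 / (2*b)))
  rw [key] at hsplit
  have hg : ∫ x : ℝ, 1 / (2*b) * Real.exp (-b * x ^ 2) = 1 / (2*b) * Real.sqrt (π / b) := by
    rw [integral_const_mul, integral_gaussian]
  rw [hg] at hsplit
  have h0 : ∫ x : ℝ, x ^ 2 * Real.exp (-b * x ^ 2) = 1 / (2*b) * Real.sqrt (π / b) := by
    linarith [hsplit.symm]
  rw [h0]; ring


lemma gaussianPDFReal_zero_mean (v : ℝ≥0) (x : ℝ) :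
    gaussianPDFReal 0 v x
      = (Real.sqrt (2 * π * v))⁻¹ * Real.exp (-(1 / (2 * v)) * x ^ 2) := by
  rw [gaussianPDFReal]
  congr 1
  rw [sub_zero]
  by_cases hv : (v:ℝ) = 0
  · simp [hv]
  · field_simp

lemma gaussian_integral_eq {v : ℝ≥0} (hv : v ≠ 0) (g : ℝ → ℝ) :
    ∫ x, g x ∂(gaussianReal 0 v) = ∫ x, gaussianPDFReal 0 v x * g x := by
  rw [gaussianReal_of_var_ne_zero 0 hv]
  have hd : (gaussianPDF 0 v) = fun x => ((gaussianPDFReal 0 v x).toNNReal : ℝ≥0∞) := rfl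
  rw [hd, integral_withDensity_eq_integral_smul
    (measurable_gaussianPDFReal 0 v).real_toNNReal g]
  congr 1
  funext x
  rw [NNReal.smul_def, Real.coe_toNNReal _ (gaussianPDFReal_nonneg 0 v x), smul_eq_mul]

lemma gaussian_integrable_iff {v : ℝ≥0} (hv : v ≠ 0) (g : ℝ → ℝ) :
    Integrable g (gaussianReal 0 v) ↔
      Integrable (fun x => g x * gaussianPDFReal 0 v x) := by
  rw [gaussianReal_of_var_ne_zero 0 hv,
    integrable_withDensity_iff (measurable_gaussianPDF 0 v)
      (ae_of_all _ fun x => ENNReal.ofReal_lt_top)]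
  constructor <;> intro h <;> refine h.congr (ae_of_all _ fun x => ?_) <;>
    simp only [gaussianPDF_def, ENNReal.toReal_ofReal (gaussianPDFReal_nonneg 0 v x)]

lemma integrable_id_gaussianReal {v : ℝ≥0} (hv : v ≠ 0) :
    Integrable (fun x : ℝ => x) (gaussianReal 0 v) := by
  rw [gaussian_integrable_iff hv]
  have hvpos : (0:ℝ) < v := by positivity
  have hb : (0:ℝ) < 1 / (2 * v) := by positivity
  have h := (integrable_mul_exp_neg_mul_sq hb).const_mul ((Real.sqrt (2 * π * v))⁻¹)
  refine h.congr (ae_of_all _ fun x => ?_)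
  simp only [gaussianPDFReal_zero_mean]
  ring

lemma integrable_sq_gaussianReal {v : ℝ≥0} (hv : v ≠ 0) :
    Integrable (fun x : ℝ => x ^ 2) (gaussianReal 0 v) := by
  rw [gaussian_integrable_iff hv]
  have hvpos : (0:ℝ) < v := by positivity
  have hb : (0:ℝ) < 1 / (2 * v) := by positivity
  have h := (integrable_sq_mul_exp_neg_mul_sq hb).const_mul ((Real.sqrt (2 * π * v))⁻¹)
  refine h.congr (ae_of_all _ fun x => ?_)
  simp only [gaussianPDFReal_zero_mean]
  ring

lemma integral_id_gaussianReal (v : ℝ≥0) :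
    ∫ x, x ∂(gaussianReal 0 v) = 0 := by
  by_cases hv : v = 0
  · simp [hv, gaussianReal_zero_var]
  have hmap : Measure.map (fun x : ℝ => -1 * x) (gaussianReal 0 v) = gaussianReal 0 v := by
    rw [gaussianReal_map_const_mul (-1)]
    congr 1
    · norm_num
    · conv_rhs => rw [← one_mul v]
      congr 1
      ext
      push_cast
      norm_num
  have hmeas : AEMeasurable (fun x : ℝ => -1 * x) (gaussianReal 0 v) :=
    (measurable_id.const_mul _).aemeasurable
  have h1 : ∫ x, x ∂(gaussianReal 0 v) = ∫ x, x ∂(Measure.map (fun x : ℝ => -1 * x) (gaussianReal 0 v)) := by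
    rw [hmap]
  rw [integral_map (f := fun x : ℝ => x) hmeas aestronglyMeasurable_id] at h1
  simp only [neg_one_mul] at h1
  rw [integral_neg] at h1
  linarith

lemma integral_sq_gaussianReal {v : ℝ≥0} (hv : v ≠ 0) :
    ∫ x, x ^ 2 ∂(gaussianReal 0 v) = v := by
  have hvpos : (0:ℝ) < v := by positivity
  have hb : (0:ℝ) < 1 / (2 * v) := by positivity
  rw [gaussian_integral_eq hv]
  have : ∀ x : ℝ, gaussianPDFReal 0 v x * x ^ 2
      = (Real.sqrt (2 * π * v))⁻¹ * (x ^ 2 * Real.exp (-(1 / (2 * v)) * x ^ 2)) := by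
    intro x; rw [gaussianPDFReal_zero_mean]; ring
  simp_rw [this]
  rw [integral_const_mul, integral_sq_mul_exp_neg_mul_sq hb]
  have h1 : π / (1 / (2 * v)) = 2 * π * v := by field_simp
  have h2 : 2 * (1 / (2 * (v:ℝ))) = 1 / v := by field_simp
  rw [h1, h2]
  have h3 : Real.sqrt (2 * π * v) ≠ 0 := by positivity
  field_simp
/-- The rotation-scaling `(a, b) ↦ (a + b, a - b)` as a measurable equivalence. -/
noncomputable def rotEquiv : (ℝ × ℝ) ≃ᵐ (ℝ × ℝ) where
  toFun := fun p => (p.1 + p.2, p.1 - p.2)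
  invFun := fun p => ((p.1 + p.2) / 2, (p.1 - p.2) / 2)
  left_inv := fun p => by ext <;> dsimp <;> ring
  right_inv := fun p => by ext <;> dsimp <;> ring
  measurable_toFun := ((measurable_fst.add measurable_snd).prodMk
    (measurable_fst.sub measurable_snd))
  measurable_invFun := (((measurable_fst.add measurable_snd).div_const 2).prodMk
    ((measurable_fst.sub measurable_snd).div_const 2))

lemma rotEquiv_symm_apply (p : ℝ × ℝ) :
    rotEquiv.symm p = ((p.1 + p.2) / 2, (p.1 - p.2) / 2) := rfl

lemma map_withDensity_equiv {α β : Type*} [MeasurableSpace α] [MeasurableSpace β]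
    (e : α ≃ᵐ β) (μ : Measure α) {f : α → ℝ≥0∞} (hf : Measurable f) :
    Measure.map e (μ.withDensity f) = (Measure.map e μ).withDensity (fun y => f (e.symm y)) := by
  ext s hs
  rw [Measure.map_apply e.measurable hs, withDensity_apply _ (e.measurable hs),
    withDensity_apply _ hs,
    setLIntegral_map (f := fun y => f (e.symm y)) hs (hf.comp e.symm.measurable) e.measurable]
  refine setLIntegral_congr_fun_ae (e.measurable hs) (ae_of_all _ fun x _ => ?_)
  rw [e.symm_apply_apply]

lemma map_rotEquiv_volume :
    Measure.map rotEquiv (volume : Measure (ℝ × ℝ)) = ENNReal.ofReal (1/2) • volume := by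
  have hL : (rotEquiv : ℝ × ℝ → ℝ × ℝ)
      = ⇑(Matrix.toLin (Module.Basis.finTwoProd ℝ) (Module.Basis.finTwoProd ℝ) !![1, 1; 1, -1]) := by
    funext p
    rw [Matrix.toLin_finTwoProd_apply]
    show (p.1 + p.2, p.1 - p.2) = _
    norm_num [sub_eq_add_neg]
  have hdet : LinearMap.det (Matrix.toLin (Module.Basis.finTwoProd ℝ) (Module.Basis.finTwoProd ℝ)
      !![(1:ℝ), 1; 1, -1]) = -2 := by
    rw [LinearMap.det_toLin, Matrix.det_fin_two_of]; norm_num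
  have habs : ENNReal.ofReal |((-2:ℝ))⁻¹| = ENNReal.ofReal (1/2) := by
    congr 1
    rw [abs_inv, abs_of_nonpos (by norm_num : (-2:ℝ) ≤ 0)]
    norm_num
  have h := Measure.map_linearMap_addHaar_eq_smul_addHaar (volume : Measure (ℝ × ℝ))
    (f := Matrix.toLin (Module.Basis.finTwoProd ℝ) (Module.Basis.finTwoProd ℝ) !![(1:ℝ), 1; 1, -1])
    (by rw [hdet]; norm_num)
  rw [hdet] at h
  rw [show Measure.map (⇑rotEquiv) (volume : Measure (ℝ × ℝ))
      = Measure.map (⇑(Matrix.toLin (Module.Basis.finTwoProd ℝ) (Module.Basis.finTwoProd ℝ)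
        !![(1:ℝ), 1; 1, -1])) volume from by rw [← hL], h, habs]

lemma gaussian_prod_withDensity {v : ℝ≥0} (hv : v ≠ 0) :
    (gaussianReal 0 v).prod (gaussianReal 0 v)
      = (volume : Measure (ℝ × ℝ)).withDensity
          (fun p => gaussianPDF 0 v p.1 * gaussianPDF 0 v p.2) := by
  refine Measure.prod_eq fun s t hs ht => ?_
  rw [withDensity_apply _ (hs.prod ht), Measure.volume_eq_prod, ← Measure.prod_restrict,
    lintegral_prod_mul (measurable_gaussianPDF 0 v).aemeasurable
      (measurable_gaussianPDF 0 v).aemeasurable,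
    ← gaussianReal_apply 0 hv s, ← gaussianReal_apply 0 hv t]

lemma gaussianPDF_rot {v : ℝ≥0} (hv : v ≠ 0) (u w : ℝ) :
    ENNReal.ofReal (1/2) * (gaussianPDF 0 v ((u + w)/2) * gaussianPDF 0 v ((u - w)/2))
      = gaussianPDF 0 (2 * v) u * gaussianPDF 0 (2 * v) w := by
  have hvpos : (0:ℝ) < v := by positivity
  simp only [gaussianPDF_def]
  rw [← ENNReal.ofReal_mul (gaussianPDFReal_nonneg _ _ _),
    ← ENNReal.ofReal_mul (by norm_num), ← ENNReal.ofReal_mul (gaussianPDFReal_nonneg _ _ _)]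
  congr 1
  simp only [gaussianPDFReal_zero_mean]
  push_cast
  have hexp : Real.exp (-(1 / (2 * (v:ℝ))) * ((u + w)/2) ^ 2)
        * Real.exp (-(1 / (2 * (v:ℝ))) * ((u - w)/2) ^ 2)
      = Real.exp (-(1 / (2 * (2 * (v:ℝ)))) * u ^ 2)
        * Real.exp (-(1 / (2 * (2 * (v:ℝ)))) * w ^ 2) := by
    rw [← Real.exp_add, ← Real.exp_add]
    congr 1
    field_simp
    ring
  have hA : (0:ℝ) < 2 * π * v := by positivity
  have hB : (0:ℝ) < 2 * π * (2 * v) := by positivity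
  have hcoef : 1/2 * ((Real.sqrt (2 * π * v))⁻¹ * (Real.sqrt (2 * π * v))⁻¹)
      = (Real.sqrt (2 * π * (2 * v)))⁻¹ * (Real.sqrt (2 * π * (2 * v)))⁻¹ := by
    rw [← mul_inv, ← mul_inv, Real.mul_self_sqrt hA.le, Real.mul_self_sqrt hB.le]
    rw [show 2 * π * (2 * (v:ℝ)) = 2 * (2 * π * v) by ring]
    rw [mul_inv]
    ring
  calc 1/2 * ((Real.sqrt (2 * π * v))⁻¹ * Real.exp (-(1 / (2 * (v:ℝ))) * ((u + w)/2) ^ 2)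
        * ((Real.sqrt (2 * π * v))⁻¹ * Real.exp (-(1 / (2 * (v:ℝ))) * ((u - w)/2) ^ 2)))
      = (1/2 * ((Real.sqrt (2 * π * v))⁻¹ * (Real.sqrt (2 * π * v))⁻¹))
        * (Real.exp (-(1 / (2 * (v:ℝ))) * ((u + w)/2) ^ 2)
          * Real.exp (-(1 / (2 * (v:ℝ))) * ((u - w)/2) ^ 2)) := by ring
    _ = ((Real.sqrt (2 * π * (2 * v)))⁻¹ * (Real.sqrt (2 * π * (2 * v)))⁻¹)
        * (Real.exp (-(1 / (2 * (2 * (v:ℝ)))) * u ^ 2)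
          * Real.exp (-(1 / (2 * (2 * (v:ℝ)))) * w ^ 2)) := by rw [hcoef, hexp]
    _ = _ := by ring

lemma gaussian_rot {v : ℝ≥0} (hv : v ≠ 0) :
    Measure.map (fun p : ℝ × ℝ => (p.1 + p.2, p.1 - p.2))
        ((gaussianReal 0 v).prod (gaussianReal 0 v))
      = (gaussianReal 0 (2 * v)).prod (gaussianReal 0 (2 * v)) := by
  have h2v : (2 * v : ℝ≥0) ≠ 0 := by positivity
  have hmeasf : Measurable (fun p : ℝ × ℝ => gaussianPDF 0 v p.1 * gaussianPDF 0 v p.2) :=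
    ((measurable_gaussianPDF 0 v).comp measurable_fst).mul
      ((measurable_gaussianPDF 0 v).comp measurable_snd)
  have hrot : (fun p : ℝ × ℝ => (p.1 + p.2, p.1 - p.2)) = ⇑rotEquiv := rfl
  rw [hrot, gaussian_prod_withDensity hv, map_withDensity_equiv rotEquiv _ hmeasf,
    map_rotEquiv_volume, withDensity_smul_measure, gaussian_prod_withDensity h2v,
    ← withDensity_smul _ (show Measurable fun y : ℝ × ℝ =>
        gaussianPDF 0 v (rotEquiv.symm y).1 * gaussianPDF 0 v (rotEquiv.symm y).2 from
      hmeasf.comp rotEquiv.symm.measurable)]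
  congr 1
  funext p
  simp only [Pi.smul_apply, smul_eq_mul, rotEquiv_symm_apply]
  exact gaussianPDF_rot hv p.1 p.2
open MeasureTheory ProbabilityTheory

/-- In the Kyle equilibrium the conditional variance of `Z` given the order flow
`V = (σy/σz)(Z − μz) + Y` equals `σz²/2`: half the variance is resolved. -/
theorem kyle_conditional_variance
    {Ω : Type*} [MeasurableSpace Ω] (μpr : Measure Ω) [IsProbabilityMeasure μpr]
    (Z Y : Ω → ℝ) (hZm : Measurable Z) (hYm : Measurable Y)
    (μz σz σy : ℝ) (hσz : 0 < σz) (hσy : 0 < σy)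
    (hZ : Measure.map Z μpr = gaussianReal μz (Real.toNNReal (σz ^ 2)))
    (hY : Measure.map Y μpr = gaussianReal 0 (Real.toNNReal (σy ^ 2)))
    (hindep : IndepFun Z Y μpr)
    (V : Ω → ℝ) (hV : ∀ ω, V ω = (σy / σz) * (Z ω - μz) + Y ω) :
    condExp (MeasurableSpace.comap V inferInstance) μpr
        (fun ω => (Z ω - condExp (MeasurableSpace.comap V inferInstance) μpr Z ω) ^ 2)
      =ᵐ[μpr] fun _ => σz ^ 2 / 2 := by
  have hσz' : σz ≠ 0 := ne_of_gt hσz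
  have hσy' : σy ≠ 0 := ne_of_gt hσy
  set c : ℝ := σy / σz with hc
  have hcpos : 0 < c := div_pos hσy hσz
  set k : ℝ := σz / (2 * σy) with hk
  set w : ℝ≥0 := Real.toNNReal (σy ^ 2) with hwdef
  have hw : w ≠ 0 := by
    simp only [hwdef, ne_eq, Real.toNNReal_eq_zero, not_le]
    positivity
  have h2w : (2 * w : ℝ≥0) ≠ 0 := by positivity
  have hwr : ((w : ℝ≥0) : ℝ) = σy ^ 2 := Real.coe_toNNReal _ (by positivity)
  -- centered scaled insider variable
  set Z' : Ω → ℝ := fun ω => c * (Z ω - μz) with hZ'def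
  have hZ'm : Measurable Z' := (hZm.sub_const μz).const_mul c
  set D : Ω → ℝ := fun ω => Z' ω - Y ω with hDdef
  have hDm : Measurable D := hZ'm.sub hYm
  have hVeq : V = fun ω => Z' ω + Y ω := funext fun ω => hV ω
  have hVm : Measurable V := hVeq ▸ hZ'm.add hYm
  -- law of Z'
  have h1 : Measure.map (fun ω => Z ω - μz) μpr = gaussianReal 0 (Real.toNNReal (σz ^ 2)) := by
    have he : (fun ω => Z ω - μz) = (fun x => x + -μz) ∘ Z := by
      funext ω; simp [sub_eq_add_neg]
    rw [he, ← Measure.map_map (measurable_add_const (-μz)) hZm, hZ,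
      gaussianReal_map_add_const]
    simp
  have h2 : Measure.map Z' μpr = gaussianReal 0 w := by
    have he : Z' = (fun x => c * x) ∘ (fun ω => Z ω - μz) := rfl
    rw [he, ← Measure.map_map (measurable_const_mul c) (hZm.sub_const μz), h1,
      gaussianReal_map_const_mul]
    rw [mul_zero]
    congr 1
    ext
    push_cast [hwr]
    rw [Real.coe_toNNReal _ (by positivity : (0:ℝ) ≤ σz ^ 2)]
    field_simp [hc]
    rw [hc, div_pow, div_mul_cancel₀ _ (pow_ne_zero 2 hσz')]
  -- joint law of (Z', Y)
  have hZ'Y : IndepFun Z' Y μpr := by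
    have := hindep.comp (φ := fun x => c * (x - μz)) (ψ := id)
      ((measurable_id.sub_const μz).const_mul c) measurable_id
    exact this
  have hpair : Measure.map (fun ω => (Z' ω, Y ω)) μpr
      = (gaussianReal 0 w).prod (gaussianReal 0 w) := by
    rw [(indepFun_iff_map_prod_eq_prod_map_map hZ'm.aemeasurable hYm.aemeasurable).mp hZ'Y,
      h2, hY]
  -- joint law of (V, D)
  have hmapVD : Measure.map (fun ω => (V ω, D ω)) μpr
      = (gaussianReal 0 (2 * w)).prod (gaussianReal 0 (2 * w)) := by
    have he : (fun ω => (V ω, D ω))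
        = (fun p : ℝ × ℝ => (p.1 + p.2, p.1 - p.2)) ∘ (fun ω => (Z' ω, Y ω)) := by
      funext ω
      simp only [Function.comp_apply, hVeq]
      rfl
    rw [he, ← Measure.map_map (g := fun p : ℝ × ℝ => (p.1 + p.2, p.1 - p.2)) ((measurable_fst.add measurable_snd).prodMk
      (measurable_fst.sub measurable_snd)) (hZ'm.prodMk hYm), hpair, gaussian_rot hw]
  have hVlaw : Measure.map V μpr = gaussianReal 0 (2 * w) := by
    have he : V = Prod.fst ∘ (fun ω => (V ω, D ω)) := rfl
    rw [he, ← Measure.map_map measurable_fst (hVm.prodMk hDm), hmapVD,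
      Measure.map_fst_prod]
    simp
  have hDlaw : Measure.map D μpr = gaussianReal 0 (2 * w) := by
    have he : D = Prod.snd ∘ (fun ω => (V ω, D ω)) := rfl
    rw [he, ← Measure.map_map measurable_snd (hVm.prodMk hDm), hmapVD,
      Measure.map_snd_prod]
    simp
  have hVD : IndepFun V D μpr := by
    rw [indepFun_iff_map_prod_eq_prod_map_map hVm.aemeasurable hDm.aemeasurable,
      hmapVD, hVlaw, hDlaw]
  -- integrability
  have hDint : Integrable D μpr := by
    have := (integrable_map_measure (f := D) (g := fun x : ℝ => x)
      aestronglyMeasurable_id hDm.aemeasurable).mp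
      (by rw [hDlaw]; exact integrable_id_gaussianReal h2w)
    exact this
  have hD2int : Integrable (fun ω => D ω ^ 2) μpr := by
    have := (integrable_map_measure (f := D) (g := fun x : ℝ => x ^ 2)
      (measurable_id.pow_const 2).aestronglyMeasurable hDm.aemeasurable).mp
      (by rw [hDlaw]; exact integrable_sq_gaussianReal h2w)
    exact this
  have hVint : Integrable V μpr := by
    have := (integrable_map_measure (f := V) (g := fun x : ℝ => x)
      aestronglyMeasurable_id hVm.aemeasurable).mp
      (by rw [hVlaw]; exact integrable_id_gaussianReal h2w)
    exact this
  have hZ'int : Integrable Z' μpr := by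
    have := (integrable_map_measure (f := Z') (g := fun x : ℝ => x)
      aestronglyMeasurable_id hZ'm.aemeasurable).mp
      (by rw [h2]; exact integrable_id_gaussianReal hw)
    exact this
  have hZint : Integrable Z μpr := by
    have h3 : Integrable (fun ω => c⁻¹ * Z' ω + μz) μpr :=
      (hZ'int.const_mul c⁻¹).add (integrable_const μz)
    refine h3.congr (ae_of_all _ fun ω => ?_)
    simp only [hZ'def]
    field_simp
    ring
  -- expectations
  have hED : ∫ ω, D ω ∂μpr = 0 := by
    rw [← integral_map (f := fun x : ℝ => x) hDm.aemeasurable aestronglyMeasurable_id, hDlaw,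
      _root_.integral_id_gaussianReal]
  have hED2 : ∫ ω, D ω ^ 2 ∂μpr = 2 * σy ^ 2 := by
    rw [← integral_map (f := fun x : ℝ => x ^ 2) hDm.aemeasurable
        (measurable_id.pow_const 2).aestronglyMeasurable, hDlaw,
      integral_sq_gaussianReal h2w]
    push_cast [hwr]
    ring
  -- conditional expectation of Z
  set m : MeasurableSpace Ω := MeasurableSpace.comap V inferInstance with hmdef
  have hm := hVm.comap_le (f := V)
  have hVmm : Measurable[m] V := fun s hs => ⟨s, hs, rfl⟩
  have hDmm : Measurable[MeasurableSpace.comap D inferInstance] D := fun s hs => ⟨s, hs, rfl⟩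
  have hindDm : Indep (MeasurableSpace.comap D inferInstance) m μpr := hVD.symm
  set g : Ω → ℝ := fun ω => μz + k * V ω with hgdef
  set h : Ω → ℝ := fun ω => k * D ω with hhdef
  have hgm : StronglyMeasurable[m] g :=
    (measurable_const.add (hVmm.const_mul k)).stronglyMeasurable
  have hgint : Integrable g μpr := (integrable_const μz).add (hVint.const_mul k)
  have hhint : Integrable h μpr := hDint.const_mul k
  have hdecomp : Z = g + h := by
    funext ω
    simp only [Pi.add_apply, hgdef, hhdef, hDdef, hZ'def, hVeq, hk, hc]
    field_simp
    ring
  have hcondh : μpr[h|m] =ᵐ[μpr] fun _ => (0:ℝ) := by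
    have hhsm : StronglyMeasurable[MeasurableSpace.comap D inferInstance] h :=
      (hDmm.const_mul k).stronglyMeasurable
    have := condExp_indep_eq hDm.comap_le hm hhsm hindDm
    refine this.trans (Filter.EventuallyEq.of_eq ?_)
    funext ω
    simp only [hhdef]
    rw [integral_const_mul, hED, mul_zero]
  have hcondZ : μpr[Z|m] =ᵐ[μpr] g := by
    have h4 : μpr[Z|m] =ᵐ[μpr] μpr[g|m] + μpr[h|m] := by
      rw [hdecomp]; exact condExp_add hgint hhint m
    have h5 : μpr[g|m] = g := condExp_of_stronglyMeasurable hm hgm hgint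
    refine h4.trans ?_
    rw [h5]
    filter_upwards [hcondh] with ω hω
    simp [hω]
  -- conclude
  have htarget : (fun ω => (Z ω - (μpr[Z|m]) ω) ^ 2) =ᵐ[μpr] fun ω => k ^ 2 * D ω ^ 2 := by
    filter_upwards [hcondZ] with ω hω
    rw [hω]
    simp only [hgdef, hDdef, hZ'def, hVeq, hk, hc]
    field_simp
    ring
  have hstep := condExp_congr_ae (m := m) htarget
  have hfinal : μpr[fun ω => k ^ 2 * D ω ^ 2|m] =ᵐ[μpr] fun _ => σz ^ 2 / 2 := by
    have hsm : StronglyMeasurable[MeasurableSpace.comap D inferInstance]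
        (fun ω => k ^ 2 * D ω ^ 2) :=
      ((hDmm.pow_const 2).const_mul (k ^ 2)).stronglyMeasurable
    have := condExp_indep_eq hDm.comap_le hm hsm hindDm
    refine this.trans (Filter.EventuallyEq.of_eq ?_)
    funext ω
    rw [integral_const_mul, hED2]
    simp only [hk]
    field_simp
  exact hstep.trans hfinal
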